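/- With the notation below, let (Γ, 1) be a positively signed (s ≡ +1) bipartite Coxeter graph with bipartite ordering, and let μ be the spectral radius of the adjacency matrix A. If |μ² − 2| ≤ 2 (equivalently μ ≤ 2), then the spectral radius of the Coxeter element ω_{Γ,1} equals 1; otherwise (μ > 2), the spectral radius of ω_{Γ,1} equals ((μ² − 2) + √((μ² − 2)² − 4))/2, which is the bipartite eigenvalue β_Γ. -/

import Mathlib

open Matrix

noncomputable section

/-- The Coxeter generator `s_i` (positively signed, `s ≡ +1`): it agrees with
the identity except in row `i`, where `(s_i)_{ii} = −1` and
`(s_i)_{ij} = a_{ij}` for `j ≠ i`. -/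
def coxGenPos (n : ℕ) (A : Matrix (Fin n) (Fin n) ℝ) (i : Fin n) :
    Matrix (Fin n) (Fin n) ℝ :=
  fun j k =>
    if j = i then (if k = i then -1 else A i k)
    else (if j = k then 1 else 0)

/-- The Coxeter element `ω_{Γ,1} = s_1 ⋯ s_n`. -/
def coxElt (n : ℕ) (A : Matrix (Fin n) (Fin n) ℝ) : Matrix (Fin n) (Fin n) ℝ :=
  ((List.finRange n).map (coxGenPos n A)).prod

/-- The spectral radius of a real square matrix: the maximum of `|z|` over the
complex roots `z` of its characteristic polynomial. -/
def specRad (n : ℕ) (M : Matrix (Fin n) (Fin n) ℝ) : ℝ :=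
  sSup ((fun z : ℂ => ‖z‖) '' {z : ℂ | (M.charpoly.map (algebraMap ℝ ℂ)).IsRoot z})

/-- The bipartite eigenvalue `β_Γ`: the maximum modulus of the complex roots of
`x² − (2 − μ²)x + 1`, where `μ` is the spectral radius of the adjacency matrix. -/
def bipEig (μ : ℝ) : ℝ :=
  sSup ((fun z : ℂ => ‖z‖) '' {z : ℂ | z ^ 2 - (2 - (μ : ℂ) ^ 2) * z + 1 = 0})

/-! ### Auxiliary lemmas -/

section Aux

/-- Evaluation of the characteristic polynomial. -/
lemma auxEvalCharpoly {n : ℕ} (M : Matrix (Fin n) (Fin n) ℂ) (z : ℂ) :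
    M.charpoly.eval z = (z • (1 : Matrix (Fin n) (Fin n) ℂ) - M).det := by
  rw [Matrix.charpoly, Polynomial.eval, ← Polynomial.coe_eval₂RingHom, RingHom.map_det]
  congr 1
  ext i j
  simp only [RingHom.mapMatrix_apply, Matrix.map_apply, Matrix.one_apply, Matrix.smul_apply,
    Matrix.sub_apply, Polynomial.coe_eval₂RingHom, smul_eq_mul]
  by_cases h : i = j
  · subst h; rw [Matrix.charmatrix_apply_eq]; simp
  · rw [Matrix.charmatrix_apply_ne _ _ _ h]; simp [h]

lemma auxIsRootIffDet {n : ℕ} (M : Matrix (Fin n) (Fin n) ℝ) (z : ℂ) :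
    (M.charpoly.map (algebraMap ℝ ℂ)).IsRoot z ↔
      (z • (1 : Matrix (Fin n) (Fin n) ℂ) - M.map (algebraMap ℝ ℂ)).det = 0 := by
  rw [← Matrix.charpoly_map]
  show (M.map (algebraMap ℝ ℂ)).charpoly.eval z = 0 ↔ _
  rw [auxEvalCharpoly]

/-- Product of pairwise-orthogonal Coxeter generators. -/
lemma auxProdCoxGen (n : ℕ) (A : Matrix (Fin n) (Fin n) ℝ)
    (l : List (Fin n)) (hnd : l.Nodup) (hA : ∀ i ∈ l, ∀ j ∈ l, A i j = 0) :
    (l.map (coxGenPos n A)).prod =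
      Matrix.of (fun j k => if j ∈ l then (if k = j then -1 else A j k)
        else (if j = k then 1 else 0)) := by
  induction l with
  | nil => ext j k; simp [Matrix.one_apply]
  | cons i l ih =>
    rw [List.map_cons, List.prod_cons,
      ih hnd.of_cons (fun a ha b hb => hA a (.tail _ ha) b (.tail _ hb))]
    have hi : i ∉ l := (List.nodup_cons.mp hnd).1
    ext j k
    rw [Matrix.mul_apply]
    by_cases hj : j = i
    · subst hj
      have key : ∀ m : Fin n, coxGenPos n A j j m *
          (Matrix.of (fun p k => if p ∈ l then (if k = p then -1 else A p k)
            else (if p = k then 1 else 0))) m k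
          = if m = k then (if m = j then -1 else A j m) else 0 := by
        intro m
        show (if j = j then (if m = j then -1 else A j m) else _) * _ = _
        rw [if_pos rfl]
        by_cases hm : m = j
        · subst hm
          simp only [Matrix.of_apply, if_neg hi, if_pos rfl]
          by_cases hk : m = k <;> simp [hk]
        · by_cases hml : m ∈ l
          · have h0 : A j m = 0 := hA j (.head _) m (.tail _ hml)
            simp [Matrix.of_apply, hm, h0, hml]
          · simp only [Matrix.of_apply, if_neg hml, if_neg hm]
            by_cases hk : m = k <;> simp [hk, hm]
      rw [Finset.sum_congr rfl (fun m _ => key m), Finset.sum_ite_eq' Finset.univ k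
        (fun m => if m = j then -1 else A j m)]
      simp [List.mem_cons, eq_comm]
    · have key : ∀ m : Fin n, coxGenPos n A i j m *
          (Matrix.of (fun p k => if p ∈ l then (if k = p then -1 else A p k)
            else (if p = k then 1 else 0))) m k
          = if j = m then (Matrix.of (fun p k => if p ∈ l then (if k = p then -1 else A p k)
            else (if p = k then 1 else 0))) m k else 0 := by
        intro m
        show (if j = i then _ else (if j = m then (1:ℝ) else 0)) * _ = _
        rw [if_neg hj]
        by_cases hm : j = m <;> simp [hm]
      rw [Finset.sum_congr rfl (fun m _ => key m), Finset.sum_ite_eq Finset.univ j _]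
      simp [List.mem_cons, hj]

lemma auxMemTakeFinRange {n k : ℕ} (i : Fin n) :
    i ∈ (List.finRange n).take k ↔ (i : ℕ) < k := by
  constructor
  · intro h
    obtain ⟨j, hj, hji⟩ := List.mem_iff_getElem.mp h
    rw [List.length_take, List.length_finRange] at hj
    rw [List.getElem_take, List.getElem_finRange] at hji
    subst hji; simpa using lt_min_iff.mp hj |>.1
  · intro h
    refine List.mem_iff_getElem.mpr ⟨(i : ℕ), ?_, ?_⟩
    · rw [List.length_take, List.length_finRange]; exact lt_min h i.isLt
    · rw [List.getElem_take, List.getElem_finRange]; simp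

lemma auxMemDropFinRange {n k : ℕ} (i : Fin n) :
    i ∈ (List.finRange n).drop k ↔ ¬ (i : ℕ) < k := by
  rw [not_lt]
  constructor
  · intro h
    obtain ⟨j, hj, hji⟩ := List.mem_iff_getElem.mp h
    rw [List.getElem_drop, List.getElem_finRange] at hji
    subst hji; simp
  · intro h
    have hlt : (i : ℕ) - k < ((List.finRange n).drop k).length := by
      rw [List.length_drop, List.length_finRange]; omega
    refine List.mem_iff_getElem.mpr ⟨(i : ℕ) - k, hlt, ?_⟩
    rw [List.getElem_drop, List.getElem_finRange]
    ext; simp; omega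

/-- The "reflection part" matrix supported on a set of vertices. -/
def reflMat {n : ℕ} (A : Matrix (Fin n) (Fin n) ℝ) (p : Fin n → Prop) [DecidablePred p] :
    Matrix (Fin n) (Fin n) ℝ :=
  Matrix.of fun j k => if p j then (if k = j then -1 else A j k) else (if j = k then 1 else 0)

lemma auxReflMulSelf {n : ℕ} (A : Matrix (Fin n) (Fin n) ℝ) (p : Fin n → Prop) [DecidablePred p]
    (hp : ∀ i j, p i → p j → A i j = 0) :
    reflMat A p * reflMat A p = 1 := by
  ext i k
  rw [Matrix.mul_apply]
  by_cases hi : p i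
  · have hsupp : ∀ m : Fin n, m ∉ ({i, k} : Finset (Fin n)) →
        reflMat A p i m * reflMat A p m k = 0 := by
      intro m hm
      simp only [Finset.mem_insert, Finset.mem_singleton, not_or] at hm
      obtain ⟨hmi, hmk⟩ := hm
      by_cases hpm : p m
      · simp [reflMat, hi, hpm, hmi, hp i m hi hpm]
      · simp [reflMat, hi, hpm, hmi, hmk]
    rw [← Finset.sum_subset (Finset.subset_univ ({i, k} : Finset (Fin n)))
      (fun m _ hm => hsupp m hm)]
    by_cases hik : k = i
    · subst hik
      simp [reflMat, hi, Matrix.one_apply]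
    · rw [Finset.sum_pair (fun h => hik h.symm)]
      by_cases hpk : p k
      · simp [reflMat, hi, hpk, hik, Ne.symm hik, hp i k hi hpk, Matrix.one_apply]
      · simp [reflMat, hi, hpk, hik, Ne.symm hik, Matrix.one_apply]
  · have key : ∀ m : Fin n, reflMat A p i m * reflMat A p m k
        = if i = m then reflMat A p m k else 0 := by
      intro m
      by_cases him : i = m
      · subst him; simp [reflMat, hi]
      · simp [reflMat, hi, him]
    rw [Finset.sum_congr rfl (fun m _ => key m), Finset.sum_ite_eq Finset.univ i _]
    simp [reflMat, hi, Matrix.one_apply]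

lemma auxReflAdd {n : ℕ} (A : Matrix (Fin n) (Fin n) ℝ) (k₁ : ℕ) (hdiag : ∀ i, A i i = 0) :
    reflMat A (fun j => (j : ℕ) < k₁) + reflMat A (fun j => ¬ (j : ℕ) < k₁) = A := by
  ext i k
  by_cases hi : (i : ℕ) < k₁
  · have h3 : ¬ k₁ ≤ (i : ℕ) := by omega
    by_cases hk : k = i
    · simp [reflMat, hi, h3, hk, hdiag]
    · have hik : ¬ i = k := fun h => hk h.symm
      simp [reflMat, hi, h3, hk, hik]
  · have h3 : k₁ ≤ (i : ℕ) := by omega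
    by_cases hk : k = i
    · simp [reflMat, hi, h3, hk, hdiag]
    · have hik : ¬ i = k := fun h => hk h.symm
      simp [reflMat, hi, h3, hk, hik]

lemma auxCoxEltEq {n : ℕ} (A : Matrix (Fin n) (Fin n) ℝ) (k₁ : ℕ)
    (hbip : ∀ i j : Fin n, ((i : ℕ) < k₁ ↔ (j : ℕ) < k₁) → A i j = 0) :
    coxElt n A = reflMat A (fun j => (j : ℕ) < k₁) * reflMat A (fun j => ¬ (j : ℕ) < k₁) := by
  have hsplit : List.finRange n = (List.finRange n).take k₁ ++ (List.finRange n).drop k₁ :=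
    (List.take_append_drop k₁ (List.finRange n)).symm
  rw [coxElt, hsplit, List.map_append, List.prod_append]
  rw [auxProdCoxGen n A _ ((List.take_sublist _ _).nodup (List.nodup_finRange n))
      (fun i hi j hj => hbip i j (by
        rw [auxMemTakeFinRange] at hi hj; simp [hi, hj])),
    auxProdCoxGen n A _ ((List.drop_sublist _ _).nodup (List.nodup_finRange n))
      (fun i hi j hj => hbip i j (by
        rw [auxMemDropFinRange] at hi hj; simp [hi, hj]))]
  congr 1 <;> ext j k <;>
    simp only [Matrix.of_apply, auxMemTakeFinRange, auxMemDropFinRange, reflMat]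

/-- The diagonal rescaling identity. -/
lemma auxScaleIdentity {n : ℕ} (A : Matrix (Fin n) (Fin n) ℝ) (k₁ : ℕ)
    (hbip : ∀ i j : Fin n, ((i : ℕ) < k₁ ↔ (j : ℕ) < k₁) → A i j = 0)
    (z w : ℂ) (hw0 : w ≠ 0) (hw : w * w = z)
    (E1c : Matrix (Fin n) (Fin n) ℂ)
    (hE1c : ∀ j k, E1c j k = if (j:ℕ) < k₁ then (if k = j then -1 else ((A j k : ℝ) : ℂ))
      else (if j = k then 1 else 0)) :
    (Matrix.diagonal (fun i : Fin n => if (i:ℕ) < k₁ then -w⁻¹ else 1)) *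
      ((z+1) • E1c - A.map (algebraMap ℝ ℂ)) *
      (Matrix.diagonal (fun i : Fin n => if (i:ℕ) < k₁ then w else 1)) =
    w • ((((z+1)/w) • (1 : Matrix (Fin n) (Fin n) ℂ)) - A.map (algebraMap ℝ ℂ)) := by
  ext i k
  rw [Matrix.mul_diagonal, Matrix.diagonal_mul]
  simp only [Matrix.sub_apply, Matrix.smul_apply, Matrix.map_apply, Matrix.one_apply, hE1c,
    smul_eq_mul]
  by_cases hi : (i:ℕ) < k₁ <;> by_cases hk : (k:ℕ) < k₁ <;> simp only [hi, hk, if_true, if_false]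
  · by_cases hki : k = i
    · subst hki
      have : A k k = 0 := hbip k k (by simp)
      simp [this]
      field_simp
      ring
    · have h0 : A i k = 0 := hbip i k (by simp [hi, hk])
      have hik : ¬ i = k := fun h => hki h.symm
      simp [hki, hik, h0]
  · have hki : ¬ k = i := by intro h; subst h; exact hk hi
    have hik : ¬ i = k := fun h => hki h.symm
    simp only [hki, if_false, hik]
    field_simp
    rw [← hw]
    simp only [Complex.coe_algebraMap]
    ring
  · have hki : ¬ k = i := by intro h; subst h; exact hi hk
    have hik : ¬ i = k := fun h => hki h.symm
    simp [hki, hik]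
    ring
  · by_cases hki : k = i
    · subst hki
      have : A k k = 0 := hbip k k (by simp)
      simp [this]
      field_simp
    · have hik : ¬ i = k := fun h => hki h.symm
      have h0 : A i k = 0 := hbip i k (by simp [hi, hk])
      simp [hki, hik, h0]

/-- Root symmetry of the adjacency charpoly via the sign involution. -/
lemma auxParityDet {n : ℕ} (Ac : Matrix (Fin n) (Fin n) ℂ) (k₁ : ℕ)
    (hbip : ∀ i j : Fin n, ((i : ℕ) < k₁ ↔ (j : ℕ) < k₁) → Ac i j = 0) (s : ℂ) :
    ((s • (1 : Matrix (Fin n) (Fin n) ℂ) - Ac).det = 0 ↔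
     ((-s) • (1 : Matrix (Fin n) (Fin n) ℂ) - Ac).det = 0) := by
  set J : Matrix (Fin n) (Fin n) ℂ :=
    Matrix.diagonal (fun i => if (i:ℕ) < k₁ then -1 else 1) with hJ
  have hconj : J * (s • (1 : Matrix (Fin n) (Fin n) ℂ) - Ac) * J
      = (-1 : ℂ) • ((-s) • (1 : Matrix (Fin n) (Fin n) ℂ) - Ac) := by
    ext i k
    rw [Matrix.mul_diagonal, Matrix.diagonal_mul]
    simp only [Matrix.sub_apply, Matrix.smul_apply, Matrix.one_apply, smul_eq_mul]
    by_cases hi : (i:ℕ) < k₁ <;> by_cases hk : (k:ℕ) < k₁ <;>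
      simp only [hi, hk, if_true, if_false]
    · by_cases hik : i = k
      · subst hik
        have h0 : Ac i i = 0 := hbip i i (by simp)
        simp [h0]
      · have h0 : Ac i k = 0 := hbip i k (by simp [hi, hk])
        simp [hik, h0]
    · have hik : ¬ i = k := by intro h; subst h; exact hk hi
      simp [hik]
    · have hik : ¬ i = k := by intro h; subst h; exact hi hk
      simp [hik]
    · by_cases hik : i = k
      · subst hik
        have h0 : Ac i i = 0 := hbip i i (by simp)
        simp [h0]
      · have h0 : Ac i k = 0 := hbip i k (by simp [hi, hk])
        simp [hik, h0]
  have hdetJ : J.det ≠ 0 := by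
    rw [hJ, Matrix.det_diagonal]
    apply Finset.prod_ne_zero_iff.mpr
    intro i _
    by_cases hi : (i:ℕ) < k₁ <;> simp [hi]
  have hdets := congrArg Matrix.det hconj
  rw [Matrix.det_mul, Matrix.det_mul, Matrix.det_smul] at hdets
  constructor
  · intro h
    have h2 : (-1:ℂ)^(Fintype.card (Fin n)) *
        ((-s) • (1 : Matrix (Fin n) (Fin n) ℂ) - Ac).det = 0 := by
      rw [← hdets, h]; ring
    rcases mul_eq_zero.mp h2 with h3 | h3
    · exact absurd h3 (pow_ne_zero _ (by norm_num))
    · exact h3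
  · intro h
    have h2 : J.det * (s • (1 : Matrix (Fin n) (Fin n) ℂ) - Ac).det * J.det = 0 := by
      rw [hdets, h]; ring
    rcases mul_eq_zero.mp h2 with h3 | h3
    · rcases mul_eq_zero.mp h3 with h4 | h4
      · exact absurd h4 hdetJ
      · exact h4
    · exact absurd h3 hdetJ

/-- Eigenvalues of a real symmetric matrix are real. -/
lemma auxRealEigen {n : ℕ} (Ar : Matrix (Fin n) (Fin n) ℝ) (hsym : ∀ i j, Ar i j = Ar j i)
    (s : ℂ)
    (hdet : (s • (1 : Matrix (Fin n) (Fin n) ℂ) - Ar.map (algebraMap ℝ ℂ)).det = 0) :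
    s.im = 0 := by
  set Ac := Ar.map (algebraMap ℝ ℂ) with hAc
  obtain ⟨v, hv0, hveq⟩ := (Matrix.exists_mulVec_eq_zero_iff).mpr hdet
  have heig : Ac.mulVec v = s • v := by
    have h0 : (s • (1 : Matrix (Fin n) (Fin n) ℂ)).mulVec v - Ac.mulVec v = 0 := by
      rw [← Matrix.sub_mulVec]; exact hveq
    have h1 : (s • (1 : Matrix (Fin n) (Fin n) ℂ)).mulVec v = s • v := by
      rw [Matrix.smul_mulVec, Matrix.one_mulVec]
    rw [h1] at h0
    exact (sub_eq_zero.mp h0).symm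
  set N : ℂ := ∑ i, (starRingEnd ℂ) (v i) * v i with hN
  set t : ℂ := ∑ i, (starRingEnd ℂ) (v i) * (Ac.mulVec v) i with ht
  have htN : t = s * N := by
    rw [ht, hN, Finset.mul_sum]
    congr 1; ext i
    rw [heig]
    simp [Pi.smul_apply, smul_eq_mul]; ring
  have ht2 : t = ∑ i, ∑ k, (starRingEnd ℂ) (v i) * ((Ar i k : ℝ) : ℂ) * v k := by
    rw [ht]
    congr 1; ext i
    rw [Matrix.mulVec, dotProduct, Finset.mul_sum]
    congr 1; ext k
    simp [hAc, Matrix.map_apply]; ring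
  have hconj : (starRingEnd ℂ) t = t := by
    rw [ht2, map_sum]
    rw [Finset.sum_comm]
    congr 1; ext i
    rw [map_sum]
    congr 1; ext k
    simp only [_root_.map_mul, RingHomCompTriple.comp_apply, RingHom.id_apply,
      Complex.conj_conj, Complex.conj_ofReal]
    rw [hsym i k]
    ring
  have hNreal : N = ((∑ i, Complex.normSq (v i) : ℝ) : ℂ) := by
    rw [hN]
    push_cast
    congr 1; ext i
    rw [mul_comm, Complex.mul_conj]
  have hNpos : (0:ℝ) < ∑ i, Complex.normSq (v i) := by
    obtain ⟨i, hi⟩ := Function.ne_iff.mp hv0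
    apply Finset.sum_pos' (fun j _ => Complex.normSq_nonneg _) ⟨i, Finset.mem_univ i, ?_⟩
    exact Complex.normSq_pos.mpr hi
  have hN0 : N ≠ 0 := by
    rw [hNreal]
    exact_mod_cast ne_of_gt (by exact_mod_cast hNpos)
  have hsconj : (starRingEnd ℂ) s = s := by
    have h1 : (starRingEnd ℂ) (s * N) = s * N := by rw [← htN, hconj, htN]
    rw [_root_.map_mul] at h1
    have hNc : (starRingEnd ℂ) N = N := by rw [hNreal, Complex.conj_ofReal]
    rw [hNc] at h1
    exact mul_right_cancel₀ hN0 h1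
  exact Complex.conj_eq_iff_im.mp hsconj

lemma auxConjRoot (c : ℝ) (z : ℂ) (hz : z^2 - (c:ℂ)*z + 1 = 0) :
    (starRingEnd ℂ z)^2 - (c:ℂ)*(starRingEnd ℂ z) + 1 = 0 := by
  have := congrArg (starRingEnd ℂ) hz
  simpa [map_sub, map_add, _root_.map_mul, map_pow, Complex.conj_ofReal] using this

lemma auxQuadSamePart (c : ℝ) (z : ℂ) (him : z.im ≠ 0) (hz : z^2 - (c:ℂ)*z + 1 = 0) :
    z + starRingEnd ℂ z = (c:ℂ) ∧ z * starRingEnd ℂ z = 1 := by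
  have hzc := auxConjRoot c z hz
  have hne : z - starRingEnd ℂ z ≠ 0 := by
    rw [sub_ne_zero]
    intro h
    exact him (Complex.conj_eq_iff_im.mp h.symm)
  have hfac : (z - starRingEnd ℂ z) * (z + starRingEnd ℂ z - c) = 0 := by
    linear_combination hz - hzc
  have hsum : z + starRingEnd ℂ z = (c:ℂ) := by
    rcases mul_eq_zero.mp hfac with h | h
    · exact absurd h hne
    · linear_combination h
  exact ⟨hsum, by linear_combination -hz + z * hsum⟩

lemma auxQuadA (c : ℝ) (hc : |c| ≤ 2) (z : ℂ) (hz : z^2 - (c:ℂ)*z + 1 = 0) :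
    ‖z‖ = 1 := by
  by_cases him : z.im = 0
  · have hzx : z = ((z.re : ℝ) : ℂ) := Complex.ext_iff.mpr ⟨by simp, by simp [him]⟩
    set x := z.re with hx
    rw [hzx] at hz
    have hr : x^2 - c*x + 1 = 0 := by
      have h0 : (((x^2 - c*x + 1 : ℝ)) : ℂ) = 0 := by push_cast; linear_combination hz
      exact_mod_cast h0
    have hx0 : x ≠ 0 := by intro h; rw [h] at hr; norm_num at hr
    have hcx : c * x = x^2 + 1 := by linarith
    have hcxpos : 0 < c * x := by nlinarith
    have habs : |c| * |x| = x^2 + 1 := by rw [← abs_mul, abs_of_pos hcxpos, hcx]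
    have h2x : x^2 + 1 ≤ 2 * |x| := by nlinarith [abs_nonneg x]
    have hxabs : |x| = 1 := by nlinarith [sq_abs x, abs_nonneg x]
    rw [hzx, Complex.norm_real, Real.norm_eq_abs, hxabs]
  · obtain ⟨hsum, hprod⟩ := auxQuadSamePart c z him hz
    have h0 : ((Complex.normSq z : ℝ) : ℂ) = 1 := by rw [← Complex.mul_conj]; exact hprod
    have hn : Complex.normSq z = 1 := by exact_mod_cast h0
    rw [Complex.norm_def, hn, Real.sqrt_one]

lemma auxQuadB (c : ℝ) (hc : 2 < c) (z : ℂ) (hz : z^2 - (c:ℂ)*z + 1 = 0) :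
    ‖z‖ ≤ (c + Real.sqrt (c^2 - 4))/2 := by
  by_cases him : z.im = 0
  · have hzx : z = ((z.re : ℝ) : ℂ) := Complex.ext_iff.mpr ⟨by simp, by simp [him]⟩
    set x := z.re with hx
    rw [hzx] at hz
    have hr : x^2 - c*x + 1 = 0 := by
      have h0 : (((x^2 - c*x + 1 : ℝ)) : ℂ) = 0 := by push_cast; linear_combination hz
      exact_mod_cast h0
    have hxpos : 0 < x := by nlinarith
    have hd : (2*x - c)^2 = c^2 - 4 := by linear_combination 4*hr
    have hle : 2*x - c ≤ Real.sqrt (c^2 - 4) := by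
      calc 2*x - c ≤ |2*x - c| := le_abs_self _
        _ = Real.sqrt ((2*x - c)^2) := (Real.sqrt_sq_eq_abs _).symm
        _ = Real.sqrt (c^2 - 4) := by rw [hd]
    rw [hzx, Complex.norm_real, Real.norm_eq_abs, abs_of_pos hxpos]
    linarith
  · exfalso
    obtain ⟨hsum, hprod⟩ := auxQuadSamePart c z him hz
    rw [Complex.add_conj] at hsum
    have hre : (2 * z.re : ℝ) = c := by exact_mod_cast hsum
    have hn : Complex.normSq z = 1 := by
      have h2 : ((Complex.normSq z : ℝ) : ℂ) = 1 := by rw [← Complex.mul_conj]; exact hprod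
      exact_mod_cast h2
    have habs : ‖z‖ = 1 := by rw [Complex.norm_def, hn, Real.sqrt_one]
    have h3 := Complex.abs_re_le_norm z
    rw [habs] at h3
    have h4 : z.re ≤ 1 := le_trans (le_abs_self _) h3
    linarith

lemma auxBetaRoot (c : ℝ) (hc : 2 < c) :
    ((c + Real.sqrt (c^2 - 4))/2)^2 - c*((c + Real.sqrt (c^2 - 4))/2) + 1 = 0 ∧
    1 < (c + Real.sqrt (c^2 - 4))/2 := by
  have h4 : (0:ℝ) ≤ c^2 - 4 := by nlinarith
  have hd2 : (Real.sqrt (c^2 - 4))^2 = c^2 - 4 := Real.sq_sqrt h4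
  constructor
  · linear_combination hd2/4
  · have := Real.sqrt_nonneg (c^2 - 4)
    linarith

lemma auxBetaMono (c c' : ℝ) (h2 : 2 < c) (hcc : c ≤ c') :
    (c + Real.sqrt (c^2 - 4))/2 ≤ (c' + Real.sqrt (c'^2 - 4))/2 := by
  have h0 : Real.sqrt (c^2 - 4) ≤ Real.sqrt (c'^2 - 4) :=
    Real.sqrt_le_sqrt (by nlinarith)
  linarith

end Aux

set_option maxHeartbeats 1000000 in
theorem stmt_11 (n : ℕ) (hn : 1 ≤ n) (A : Matrix (Fin n) (Fin n) ℝ)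
    (hsym : ∀ i j, A i j = A j i) (hdiag : ∀ i, A i i = 0)
    (h01 : ∀ i j, A i j = 0 ∨ A i j = 1)
    (k₁ : ℕ) (hk₁ : 1 ≤ k₁) (hk₁n : k₁ < n)
    (hbip : ∀ i j : Fin n, ((i : ℕ) < k₁ ↔ (j : ℕ) < k₁) → A i j = 0)
    (μ : ℝ) (hμ : μ = specRad n A) :
    (|μ ^ 2 - 2| ≤ 2 → specRad n (coxElt n A) = 1) ∧
    (2 < |μ ^ 2 - 2| →
      specRad n (coxElt n A) = ((μ ^ 2 - 2) + Real.sqrt ((μ ^ 2 - 2) ^ 2 - 4)) / 2 ∧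
      specRad n (coxElt n A) = bipEig μ) := by
  classical
  set Ac := A.map (algebraMap ℝ ℂ) with hAcdef
  have hbipc : ∀ i j : Fin n, ((i:ℕ) < k₁ ↔ (j:ℕ) < k₁) → Ac i j = 0 := by
    intro i j h
    simp [hAcdef, Matrix.map_apply, hbip i j h]
  set E1c := (reflMat A (fun j => (j:ℕ) < k₁)).map (algebraMap ℝ ℂ) with hE1def
  set E2c := (reflMat A (fun j => ¬ (j:ℕ) < k₁)).map (algebraMap ℝ ℂ) with hE2def
  have h11 : E1c * E1c = 1 := by
    rw [hE1def, ← Matrix.map_mul,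
      auxReflMulSelf A _ (fun i j hi hj => hbip i j (by simp [hi, hj])), Matrix.map_one _
      (map_zero _) (map_one _)]
  have h22 : E2c * E2c = 1 := by
    rw [hE2def, ← Matrix.map_mul,
      auxReflMulSelf A _ (fun i j hi hj => hbip i j (by simp [hi, hj])), Matrix.map_one _
      (map_zero _) (map_one _)]
  have hsum : E1c + E2c = Ac := by
    rw [hE1def, hE2def, hAcdef, ← Matrix.map_add _ (fun a b => map_add (algebraMap ℝ ℂ) a b), auxReflAdd A k₁ hdiag]
  have hΩ : (coxElt n A).map (algebraMap ℝ ℂ) = E1c * E2c := by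
    rw [auxCoxEltEq A k₁ hbip, Matrix.map_mul]
  have hdet1 : E1c.det * E1c.det = 1 := by rw [← Matrix.det_mul, h11, Matrix.det_one]
  have hdet2 : E2c.det * E2c.det = 1 := by rw [← Matrix.det_mul, h22, Matrix.det_one]
  have hdetE1 : E1c.det ≠ 0 := left_ne_zero_of_mul_eq_one hdet1
  have hdetE2 : E2c.det ≠ 0 := left_ne_zero_of_mul_eq_one hdet2
  have hE1c_entries : ∀ j k, E1c j k = if (j:ℕ) < k₁ then (if k = j then -1
      else ((A j k : ℝ):ℂ)) else (if j = k then 1 else 0) := by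
    intro j k
    simp only [hE1def, Matrix.map_apply, reflMat, Matrix.of_apply]
    split_ifs <;> simp
  have hzero : ∀ z : ℂ,
      (z • (1 : Matrix (Fin n) (Fin n) ℂ) - (coxElt n A).map (algebraMap ℝ ℂ)).det = 0 →
      z ≠ 0 := by
    intro z hz h0
    subst h0
    rw [zero_smul, zero_sub, hΩ, Matrix.det_neg, Matrix.det_mul] at hz
    rcases mul_eq_zero.mp hz with h | h
    · exact pow_ne_zero _ (by norm_num : (-1:ℂ) ≠ 0) h
    · rcases mul_eq_zero.mp h with h' | h'
      exacts [hdetE1 h', hdetE2 h']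
  have hiff : ∀ z w : ℂ, w ≠ 0 → w * w = z →
      ((z • (1 : Matrix (Fin n) (Fin n) ℂ) - (coxElt n A).map (algebraMap ℝ ℂ)).det = 0 ↔
       ((((z+1)/w)) • (1 : Matrix (Fin n) (Fin n) ℂ) - Ac).det = 0) := by
    intro z w hw0 hw
    have hfact : z • (1 : Matrix (Fin n) (Fin n) ℂ) - E1c * E2c
        = E1c * ((z+1) • E1c - Ac) := by
      rw [mul_sub, mul_smul_comm, h11, ← hsum, mul_add, h11]
      module
    have hscale := auxScaleIdentity A k₁ hbip z w hw0 hw E1c hE1c_entries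
    have hdets := congrArg Matrix.det hscale
    rw [Matrix.det_mul, Matrix.det_mul, Matrix.det_smul] at hdets
    have hD1 : (Matrix.diagonal (fun i : Fin n => if (i:ℕ) < k₁ then -w⁻¹ else 1)).det ≠ 0 := by
      rw [Matrix.det_diagonal]
      exact Finset.prod_ne_zero_iff.mpr (fun i _ => by
        by_cases hi : (i:ℕ) < k₁ <;> simp [hi, hw0])
    have hD2 : (Matrix.diagonal (fun i : Fin n => if (i:ℕ) < k₁ then w else 1)).det ≠ 0 := by
      rw [Matrix.det_diagonal]
      exact Finset.prod_ne_zero_iff.mpr (fun i _ => by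
        by_cases hi : (i:ℕ) < k₁ <;> simp [hi, hw0])
    have hwn : w ^ (Fintype.card (Fin n)) ≠ 0 := pow_ne_zero _ hw0
    rw [hΩ, hfact, Matrix.det_mul]
    constructor
    · intro h
      rcases mul_eq_zero.mp h with h' | h'
      · exact absurd h' hdetE1
      · have h0 : w ^ (Fintype.card (Fin n)) *
            ((((z+1)/w)) • (1 : Matrix (Fin n) (Fin n) ℂ) - Ac).det = 0 := by
          rw [← hdets, h']; ring
        rcases mul_eq_zero.mp h0 with h1 | h1
        · exact absurd h1 hwn
        · exact h1
    · intro h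
      have h0 : (Matrix.diagonal (fun i : Fin n => if (i:ℕ) < k₁ then -w⁻¹ else 1)).det *
          ((z+1) • E1c - Ac).det *
          (Matrix.diagonal (fun i : Fin n => if (i:ℕ) < k₁ then w else 1)).det = 0 := by
        rw [hdets, h]; ring
      rcases mul_eq_zero.mp h0 with h1 | h1
      · rcases mul_eq_zero.mp h1 with h2 | h2
        · exact absurd h2 hD1
        · rw [h2]; ring
      · exact absurd h1 hD2
  have hRoot : ∀ z : ℂ, ((coxElt n A).charpoly.map (algebraMap ℝ ℂ)).IsRoot z ↔
      ∃ s : ℂ, (A.charpoly.map (algebraMap ℝ ℂ)).IsRoot s ∧ z^2 - (s^2 - 2)*z + 1 = 0 := by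
    intro z
    rw [auxIsRootIffDet]
    constructor
    · intro hz
      have hz0 := hzero z hz
      obtain ⟨w, hw⟩ := IsAlgClosed.exists_pow_nat_eq z (n := 2) (by norm_num)
      have hww : w * w = z := by rw [← hw]; ring
      have hw0 : w ≠ 0 := by
        intro h; rw [h, mul_zero] at hww; exact hz0 hww.symm
      refine ⟨(z+1)/w, (auxIsRootIffDet A _).mpr ((hiff z w hw0 hww).mp hz), ?_⟩
      have hs2 : ((z+1)/w)^2 * z = (z+1)^2 := by
        rw [div_pow, hw, div_mul_cancel₀ _ hz0]
      linear_combination -hs2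
    · rintro ⟨s, hs, hquad⟩
      have hz0 : z ≠ 0 := by intro h; rw [h] at hquad; norm_num at hquad
      obtain ⟨w, hw⟩ := IsAlgClosed.exists_pow_nat_eq z (n := 2) (by norm_num)
      have hww : w * w = z := by rw [← hw]; ring
      have hw0 : w ≠ 0 := by
        intro h; rw [h, mul_zero] at hww; exact hz0 hww.symm
      have hs2 : ((z+1)/w)^2 = s^2 := by
        rw [div_pow, hw, div_eq_iff hz0]
        linear_combination hquad
      have hcases : (z+1)/w = s ∨ (z+1)/w = -s := by
        have hf : ((z+1)/w - s) * ((z+1)/w + s) = 0 := by linear_combination hs2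
        rcases mul_eq_zero.mp hf with h | h
        · exact Or.inl (sub_eq_zero.mp h)
        · exact Or.inr (eq_neg_of_add_eq_zero_left h)
      apply (hiff z w hw0 hww).mpr
      rcases hcases with h | h
      · rw [h]; exact (auxIsRootIffDet A s).mp hs
      · rw [h]; exact (auxParityDet Ac k₁ hbipc s).mp ((auxIsRootIffDet A s).mp hs)
  -- facts about the adjacency roots
  have hmonicA : (A.charpoly.map (algebraMap ℝ ℂ)).Monic := (Matrix.charpoly_monic A).map _
  have hA0 : (A.charpoly.map (algebraMap ℝ ℂ)) ≠ 0 := hmonicA.ne_zero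
  have hAroot : ∃ s : ℂ, (A.charpoly.map (algebraMap ℝ ℂ)).IsRoot s := by
    apply IsAlgClosed.exists_root
    intro hdeg
    rw [Polynomial.degree_eq_natDegree hA0, (Matrix.charpoly_monic A).natDegree_map,
      Matrix.charpoly_natDegree_eq_dim, Fintype.card_fin] at hdeg
    have : n = 0 := by exact_mod_cast hdeg
    omega
  have hSAfin : ((fun z : ℂ => ‖z‖) '' {s : ℂ | (A.charpoly.map (algebraMap ℝ ℂ)).IsRoot s}).Finite :=
    (Polynomial.finite_setOf_isRoot hA0).image _
  have hSAne : ((fun z : ℂ => ‖z‖) '' {s : ℂ | (A.charpoly.map (algebraMap ℝ ℂ)).IsRoot s}).Nonempty :=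
    ⟨‖hAroot.choose‖, ⟨hAroot.choose, hAroot.choose_spec, rfl⟩⟩
  have hμmem : μ ∈ (fun z : ℂ => ‖z‖) '' {s : ℂ | (A.charpoly.map (algebraMap ℝ ℂ)).IsRoot s} := by
    rw [hμ, specRad]
    exact hSAne.csSup_mem hSAfin
  obtain ⟨s₀, hs₀, habs₀⟩ := hμmem
  have hμub : ∀ s : ℂ, (A.charpoly.map (algebraMap ℝ ℂ)).IsRoot s → ‖s‖ ≤ μ := by
    intro s hs
    rw [hμ, specRad]
    exact le_csSup hSAfin.bddAbove ⟨s, hs, rfl⟩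
  have hμ0 : 0 ≤ μ := habs₀ ▸ norm_nonneg s₀
  have hreal : ∀ s : ℂ, (A.charpoly.map (algebraMap ℝ ℂ)).IsRoot s → s.im = 0 :=
    fun s hs => auxRealEigen A hsym s ((auxIsRootIffDet A s).mp hs)
  have him0 := hreal s₀ hs₀
  have hs₀x : ((s₀.re : ℝ) : ℂ) = s₀ := by simp [Complex.ext_iff, him0]
  have hr₀μ : |s₀.re| = μ := by rw [← Real.norm_eq_abs, ← Complex.norm_real, hs₀x]; exact habs₀
  have hr₀sq : s₀.re^2 = μ^2 := by nlinarith [sq_abs s₀.re]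
  have hs₀sq : s₀^2 = ((s₀.re^2 : ℝ) : ℂ) := by
    conv_lhs => rw [← hs₀x]
    norm_cast
  constructor
  · -- case μ ≤ 2
    intro h2
    have hμle2 : μ ≤ 2 := by nlinarith [(abs_le.mp h2).2]
    rw [specRad]
    have himg : (fun z : ℂ => ‖z‖) '' {z : ℂ |
        ((coxElt n A).charpoly.map (algebraMap ℝ ℂ)).IsRoot z} = {1} := by
      apply Set.eq_singleton_iff_unique_mem.mpr
      constructor
      · -- 1 is attained
        have hcabs : |s₀.re^2 - 2| ≤ 2 := abs_le.mpr ⟨by nlinarith [sq_nonneg s₀.re], by nlinarith [hr₀sq, hμle2, hμ0]⟩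
        obtain ⟨d, hd⟩ := IsAlgClosed.exists_pow_nat_eq
          (((s₀.re^2 - 2 : ℝ):ℂ)^2 - 4) (n := 2) (by norm_num)
        have hq : (((s₀.re^2 - 2 : ℝ):ℂ) + d)/2 * ((((s₀.re^2 - 2 : ℝ):ℂ) + d)/2)
            = (((s₀.re^2 - 2 : ℝ):ℂ) + d)/2 * ((((s₀.re^2 - 2 : ℝ):ℂ) + d)/2) := rfl
        have hquad : ((((s₀.re^2 - 2 : ℝ):ℂ) + d)/2)^2 -
            ((s₀.re^2 - 2 : ℝ):ℂ) * ((((s₀.re^2 - 2 : ℝ):ℂ) + d)/2) + 1 = 0 := by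
          linear_combination hd/4
        refine ⟨(((s₀.re^2 - 2 : ℝ):ℂ) + d)/2, ?_, auxQuadA _ hcabs _ hquad⟩
        apply (hRoot _).mpr ⟨s₀, hs₀, ?_⟩
        rw [hs₀sq]
        push_cast
        push_cast at hquad
        linear_combination hquad
      · rintro x ⟨z, hz, rfl⟩
        obtain ⟨s, hs, hquad⟩ := (hRoot z).mp hz
        have him := hreal s hs
        have hsx : ((s.re : ℝ) : ℂ) = s := by simp [Complex.ext_iff, him]
        have hrle : |s.re| ≤ μ := by
          rw [← Real.norm_eq_abs, ← Complex.norm_real, hsx]; exact hμub s hs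
        have hcabs : |s.re^2 - 2| ≤ 2 := abs_le.mpr ⟨by nlinarith [sq_nonneg s.re], by nlinarith [sq_abs s.re, abs_nonneg s.re, hrle, hμle2, hμ0]⟩
        have hssq : s^2 = ((s.re^2 : ℝ) : ℂ) := by
          conv_lhs => rw [← hsx]
          norm_cast
        apply auxQuadA (s.re^2 - 2) hcabs z
        rw [hssq] at hquad
        push_cast at hquad ⊢
        linear_combination hquad
    rw [himg, csSup_singleton]
  · -- case μ > 2
    intro h2
    have hc₀ : 2 < μ^2 - 2 := by
      rcases lt_abs.mp h2 with h | h
      · exact h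
      · nlinarith [sq_nonneg μ]
    obtain ⟨hβroot, hβ1⟩ := auxBetaRoot (μ^2 - 2) hc₀
    have hβpos : 0 < (μ^2 - 2 + Real.sqrt ((μ^2 - 2)^2 - 4))/2 := by linarith
    have hgreat : IsGreatest ((fun z : ℂ => ‖z‖) '' {z : ℂ |
        ((coxElt n A).charpoly.map (algebraMap ℝ ℂ)).IsRoot z})
        ((μ^2 - 2 + Real.sqrt ((μ^2 - 2)^2 - 4))/2) := by
      constructor
      · refine ⟨(((μ^2 - 2 + Real.sqrt ((μ^2 - 2)^2 - 4))/2 : ℝ) : ℂ), ?_, ?_⟩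
        · apply (hRoot _).mpr ⟨s₀, hs₀, ?_⟩
          rw [hs₀sq, hr₀sq]
          have hcc := congrArg (fun t : ℝ => (t : ℂ)) hβroot
          push_cast at hcc ⊢
          linear_combination hcc
        · beta_reduce; rw [Complex.norm_real, Real.norm_eq_abs, abs_of_pos hβpos]
      · rintro x ⟨z, hz, rfl⟩
        obtain ⟨s, hs, hquad⟩ := (hRoot z).mp hz
        have him := hreal s hs
        have hsx : ((s.re : ℝ) : ℂ) = s := by simp [Complex.ext_iff, him]
        have hrle : |s.re| ≤ μ := by
          rw [← Real.norm_eq_abs, ← Complex.norm_real, hsx]; exact hμub s hs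
        have hr2 : s.re^2 ≤ μ^2 := by nlinarith [sq_abs s.re, mul_le_mul hrle hrle (abs_nonneg s.re) hμ0]
        have hssq : s^2 = ((s.re^2 : ℝ) : ℂ) := by
          conv_lhs => rw [← hsx]
          norm_cast
        have hquad' : z^2 - ((s.re^2 - 2 : ℝ) : ℂ)*z + 1 = 0 := by
          rw [hssq] at hquad
          push_cast at hquad ⊢
          linear_combination hquad
        by_cases hc : s.re^2 - 2 ≤ 2
        · have habs1 : ‖z‖ = 1 :=
            auxQuadA _ (abs_le.mpr ⟨by nlinarith, hc⟩) z hquad'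
          beta_reduce; rw [habs1]; linarith
        · push_neg at hc
          calc ‖z‖
              ≤ (s.re^2 - 2 + Real.sqrt ((s.re^2-2)^2 - 4))/2 := auxQuadB _ hc z hquad'
            _ ≤ (μ^2 - 2 + Real.sqrt ((μ^2 - 2)^2 - 4))/2 :=
                auxBetaMono _ _ hc (by linarith)
    have hspec : specRad n (coxElt n A) = (μ^2 - 2 + Real.sqrt ((μ^2 - 2)^2 - 4))/2 := by
      rw [specRad]; exact hgreat.csSup_eq
    refine ⟨hspec, ?_⟩
    rw [hspec, bipEig]
    have hgreat2 : IsGreatest ((fun z : ℂ => ‖z‖) '' {z : ℂ | z^2 - (2 - (μ:ℂ)^2)*z + 1 = 0})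
        ((μ^2 - 2 + Real.sqrt ((μ^2 - 2)^2 - 4))/2) := by
      constructor
      · refine ⟨-(((μ^2 - 2 + Real.sqrt ((μ^2 - 2)^2 - 4))/2 : ℝ) : ℂ), ?_, ?_⟩
        · show (-(((μ^2 - 2 + Real.sqrt ((μ^2 - 2)^2 - 4))/2 : ℝ) : ℂ))^2 -
            (2 - (μ:ℂ)^2) * (-(((μ^2 - 2 + Real.sqrt ((μ^2 - 2)^2 - 4))/2 : ℝ) : ℂ)) + 1 = 0
          have hcc : (((μ^2 - 2 + Real.sqrt ((μ^2 - 2)^2 - 4))/2)^2 -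
              (μ^2 - 2)*((μ^2 - 2 + Real.sqrt ((μ^2 - 2)^2 - 4))/2) + 1 : ℂ) = 0 := by
            exact_mod_cast congrArg Complex.ofReal hβroot
          push_cast at hcc ⊢
          linear_combination hcc
        · beta_reduce; rw [← Complex.ofReal_neg, Complex.norm_real, Real.norm_eq_abs, abs_neg, abs_of_pos hβpos]
      · rintro x ⟨z, hz, rfl⟩
        have hz' : z^2 - (2 - (μ:ℂ)^2)*z + 1 = 0 := hz
        have hquad' : (-z)^2 - ((μ^2 - 2 : ℝ):ℂ)*(-z) + 1 = 0 := by
          push_cast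
          linear_combination hz'
        have hle := auxQuadB (μ^2-2) hc₀ (-z) hquad'
        rwa [norm_neg] at hle
    exact hgreat2.csSup_eq.symm

end
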